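/- Let F be a field of characteristic 0 and let a, b, p, d₁₁, d₁₂, d₂₁ ∈ F with a ≠ 0, p ≠ 0, and d₂₁ ≠ 0. Set W₁₁ := p·(Z₁₁ − d₁₁), Q₁₂ := Z₁₂ − p²·d₁₂, A := d₁₂·d₂₁²·p² + d₁₂·p² + d₂₁²·Z₁₂, B := 2·d₁₁·d₂₁·p·Z₁₂ − 2·d₁₂·d₂₁·p²·W₁₁, C := −2·d₁₁·p·W₁₁·Z₁₂ + d₂₁·Z₁₂² − p²·Z₁₂²·Z₂₁, R3 := d₂₁·B − 2·d₁₁·p·A, and R4 := d₂₁·C − Q₁₂·A. Then R3 and R4 do not both belong to the ideal I generated by X₁₁·X₂₂ − X₁₂·X₂₁ − 1; i.e., at least one of the two polynomials lies outside I. (This is the claim of Proposition 5.7, Case 1.i.c: at least one of the relations A·B′ = B·A′ and A·C′ = C·A′ is non-trivial.) -/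

import Mathlib

open MvPolynomial

/-! Variables: `X 0 = X₁₁`, `X 1 = X₁₂`, `X 2 = X₂₁`, `X 3 = X₂₂`.
The `Z i j` below are the entries of `adj(Y)·M·Y` where `Y = (Xᵢⱼ)` is the generic
`2×2` matrix and `M = [[a, 0], [b, −a]]`. -/

/-- `Z₁₁ = a·X₁₁·X₂₂ − b·X₁₁·X₁₂ + a·X₁₂·X₂₁`. -/
noncomputable def Z11 (F : Type*) [Field F] (a b : F) : MvPolynomial (Fin 4) F :=
  C a * X 0 * X 3 - C b * X 0 * X 1 + C a * X 1 * X 2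

/-- `Z₁₂ = 2a·X₁₂·X₂₂ − b·X₁₂²`. -/
noncomputable def Z12 (F : Type*) [Field F] (a b : F) : MvPolynomial (Fin 4) F :=
  C (2 * a) * X 1 * X 3 - C b * X 1 ^ 2

/-- `Z₂₁ = b·X₁₁² − 2a·X₁₁·X₂₁`. -/
noncomputable def Z21 (F : Type*) [Field F] (a b : F) : MvPolynomial (Fin 4) F :=
  C b * X 0 ^ 2 - C (2 * a) * X 0 * X 2

/-- The defining ideal of `SL₂`: generated by `X₁₁·X₂₂ − X₁₂·X₂₁ − 1`. -/
noncomputable def sl2Ideal (F : Type*) [Field F] : Ideal (MvPolynomial (Fin 4) F) :=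
  Ideal.span {X 0 * X 3 - X 1 * X 2 - 1}

/-- Proposition 5.7, Case 1.i.c: with `W₁₁ := p·(Z₁₁ − d₁₁)`, `Q₁₂ := Z₁₂ − p²·d₁₂`,
`A := d₁₂·d₂₁²·p² + d₁₂·p² + d₂₁²·Z₁₂`, `B := 2·d₁₁·d₂₁·p·Z₁₂ − 2·d₁₂·d₂₁·p²·W₁₁`,
`C' := −2·d₁₁·p·W₁₁·Z₁₂ + d₂₁·Z₁₂² − p²·Z₁₂²·Z₂₁`, `R3 := d₂₁·B − 2·d₁₁·p·A` and
`R4 := d₂₁·C' − Q₁₂·A`, the polynomials `R3` and `R4` do not both lie in the ideal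
generated by `X₁₁·X₂₂ − X₁₂·X₂₁ − 1`. -/

private lemma eval_sl2 {F : Type*} [Field F] (x : Fin 4 → F)
    (hx : x 0 * x 3 - x 1 * x 2 - 1 = 0) {q : MvPolynomial (Fin 4) F}
    (hq : q ∈ sl2Ideal F) : MvPolynomial.eval x q = 0 := by
  rw [sl2Ideal, Ideal.mem_span_singleton] at hq
  obtain ⟨r, rfl⟩ := hq
  have : MvPolynomial.eval x ((X 0 * X 3 - X 1 * X 2 - 1 : MvPolynomial (Fin 4) F)) = 0 := by
    simpa using hx
  simp [this]

theorem ramified_case1ic (F : Type*) [Field F] [CharZero F] (a b p d11 d12 d21 : F)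
    (ha : a ≠ 0) (hp : p ≠ 0) (hd21 : d21 ≠ 0)
    (W11 : MvPolynomial (Fin 4) F) (hW11 : W11 = C p * (Z11 F a b - C d11))
    (Q12 : MvPolynomial (Fin 4) F) (hQ12 : Q12 = Z12 F a b - C (p ^ 2 * d12))
    (A : MvPolynomial (Fin 4) F)
    (hA : A = C (d12 * d21 ^ 2 * p ^ 2) + C (d12 * p ^ 2) + C (d21 ^ 2) * Z12 F a b)
    (B : MvPolynomial (Fin 4) F)
    (hB : B = C (2 * d11 * d21 * p) * Z12 F a b - C (2 * d12 * d21 * p ^ 2) * W11)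
    (Cpoly : MvPolynomial (Fin 4) F)
    (hC : Cpoly = -(C (2 * d11 * p) * W11 * Z12 F a b) + C d21 * Z12 F a b ^ 2
      - C (p ^ 2) * Z12 F a b ^ 2 * Z21 F a b)
    (R3 : MvPolynomial (Fin 4) F)
    (hR3 : R3 = C d21 * B - C (2 * d11 * p) * A)
    (R4 : MvPolynomial (Fin 4) F)
    (hR4 : R4 = C d21 * Cpoly - Q12 * A) :
    ¬(R3 ∈ sl2Ideal F ∧ R4 ∈ sl2Ideal F) := by
  rintro ⟨h3, h4⟩
  subst hR3 hR4 hB hC hQ12 hA hW11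
  by_cases hd12 : d12 = 0
  · subst hd12
    have e0 := eval_sl2 ![1, 1, 0, 1] (by norm_num [Matrix.cons_val_three, Matrix.cons_val_two]) h4
    have e1 := eval_sl2 ![1, 1, 1, 2] (by norm_num [Matrix.cons_val_three, Matrix.cons_val_two]) h4
    have e2 := eval_sl2 ![1, 1, 2, 3] (by norm_num [Matrix.cons_val_three, Matrix.cons_val_two]) h4
    have e3 := eval_sl2 ![1, 1, 3, 4] (by norm_num [Matrix.cons_val_three, Matrix.cons_val_two]) h4
    simp [Z11, Z12, Z21] at e0 e1 e2 e3
    have key : (48 : F) * a ^ 3 * p ^ 2 * d21 = 0 := by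
      linear_combination e3 - 3 * e2 + 3 * e1 - e0
    exact mul_ne_zero (mul_ne_zero (mul_ne_zero (by norm_num : (48:F) ≠ 0)
      (pow_ne_zero 3 ha)) (pow_ne_zero 2 hp)) hd21 key
  · have e1 := eval_sl2 ![1, 0, 0, 1] (by norm_num [Matrix.cons_val_three, Matrix.cons_val_two]) h3
    have e2 := eval_sl2 ![0, 1, -1, 0] (by norm_num [Matrix.cons_val_three, Matrix.cons_val_two]) h3
    simp [Z11, Z12, Z21] at e1 e2
    have key : (-4 : F) * a * p ^ 3 * d12 * d21 ^ 2 = 0 := by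
      linear_combination e1 - e2
    exact mul_ne_zero (mul_ne_zero (mul_ne_zero (mul_ne_zero
      (by norm_num : (-4:F) ≠ 0) ha) (pow_ne_zero 3 hp)) hd12)
      (pow_ne_zero 2 hd21) key
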